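/- Let P be a program with deterministic small-step semantics and S a standard security context for P. The Kripke interpretation of P and S satisfies perfect recall: for every agent A, every temporally sound formula φ, and every world w, if w ⊨ [K^C_A]φ then w ⊨ □[K^C_A]φ (i.e., every T-successor w' of w satisfies [K^C_A]φ). -/

import Mathlib

/-!
Security properties through the lens of modal logic: Kripke interpretations
of deterministic programs with a standard security context.

A program is given by its text, a domain of values for each variable, and a
deterministic small-step semantics, modelled as a partial function `step` on
configurations (`none` meaning that the configuration admits no further step).
Worlds of the Kripke interpretation are the finite traces from valid initial
stores; by determinism such a trace is represented by its initial store
together with its length.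
-/

attribute [local instance] Classical.propDecidable

namespace SecModal

/-- The usual box modality for a relation `R`: `φ` holds at all `R`-successors. -/
def box {W : Type} (R : W → W → Prop) (φ : W → Prop) (w : W) : Prop :=
  ∀ w', R w w' → φ w'

/-- The usual diamond modality for a relation `R`: `φ` holds at some `R`-successor. -/
def dia {W : Type} (R : W → W → Prop) (φ : W → Prop) (w : W) : Prop :=
  ∃ w', R w w' ∧ φ w'

/-- Temporal soundness of a formula `φ` with respect to a time relation `T`:
at every world, `φ` holds iff `□φ` holds. -/
def TS {W : Type} (T : W → W → Prop) (φ : W → Prop) : Prop :=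
  ∀ w, φ w ↔ box T φ w

/-- A store assigns a value to each variable. -/
abbrev Store (Var Val : Type) : Type := Var → Val

/-- A configuration pairs a program text with a store. -/
abbrev Config (Prog Var Val : Type) : Type := Prog × Store Var Val

/-- Restriction of a store to a set of variables `S` (`none` outside `S`). -/
noncomputable def restrict {Var Val : Type} (S : Set Var) (σ : Store Var Val) : Var → Option Val :=
  fun v => if v ∈ S then some (σ v) else none

/-- Destuttering: removal of consecutive duplicate entries of a list. -/
noncomputable def dest {α : Type} (l : List α) : List α :=
  l.destutter (· ≠ ·)

/-- A program `⟨p, V, I⟩` with deterministic small-step semantics: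
`text` is the program text `p`, `dom` assigns to each variable its domain of
values `I(v)`, and `step` is the deterministic small-step transition function. -/
structure Program (Prog Var Val : Type) : Type where
  text : Prog
  dom : Var → Set Val
  step : Config Prog Var Val → Option (Config Prog Var Val)

namespace Program

variable {Prog Var Val Agent : Type}

/-- `n`-fold iteration of the small-step semantics. -/
def iter (P : Program Prog Var Val) : ℕ → Config Prog Var Val → Option (Config Prog Var Val)
  | 0, c => some c
  | n + 1, c => (P.iter n c).bind P.step

/-- The configuration reached after `k` steps from `c` (defaulting to `c` when undefined). -/
def configAt (P : Program Prog Var Val) (c : Config Prog Var Val) (k : ℕ) :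
    Config Prog Var Val :=
  (P.iter k c).getD c

/-- The view, through the variables in `S`, of the trace of length `n` (i.e. with `n + 1`
configurations) starting at `c`: the destuttering of the list of restricted stores. -/
noncomputable def pview (P : Program Prog Var Val) (S : Set Var) (c : Config Prog Var Val)
    (n : ℕ) : List (Var → Option Val) :=
  dest ((List.range (n + 1)).map fun k => restrict S (P.configAt c k).2)

/-- The maximal trace generated from `c` halts. -/
def halts (P : Program Prog Var Val) (c : Config Prog Var Val) : Prop :=
  ∃ n c', P.iter n c = some c' ∧ P.step c' = none

/-- The maximal trace generated from `c` diverges (is infinite). -/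
def diverges (P : Program Prog Var Val) (c : Config Prog Var Val) : Prop :=
  ¬ P.halts c

/-- The (possibly infinite) views through `S` of the maximal traces generated from
`c₁` and `c₂` are equal: every view of a finite prefix of the one is a prefix of a view
of a finite prefix of the other, and vice versa. -/
def mviewEq (P : Program Prog Var Val) (S : Set Var) (c₁ c₂ : Config Prog Var Val) : Prop :=
  (∀ n, (P.iter n c₁).isSome = true →
    ∃ m, (P.iter m c₂).isSome = true ∧ P.pview S c₁ n <+: P.pview S c₂ m) ∧
  (∀ n, (P.iter n c₂).isSome = true →
    ∃ m, (P.iter m c₁).isSome = true ∧ P.pview S c₂ n <+: P.pview S c₁ m)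

/-- A valid initial store: every variable takes a value in its domain. -/
def ValidStore (P : Program Prog Var Val) (σ : Store Var Val) : Prop :=
  ∀ v, σ v ∈ P.dom v

/-- Worlds of the Kripke interpretation of `P`: the finite traces of `P`, represented
by a valid initial store together with a length for which the iterated step is defined
(the trace itself is recovered by determinism of the semantics). -/
structure World (P : Program Prog Var Val) : Type where
  init : Store Var Val
  valid : ∀ v, init v ∈ P.dom v
  len : ℕ
  defined : (P.iter len (P.text, init)).isSome = true

/-- The store at time `k` along the trace `w`. -/
def World.store {P : Program Prog Var Val} (w : P.World) (k : ℕ) : Store Var Val :=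
  (P.configAt (P.text, w.init) k).2

/-- The view of the world (finite trace) `w` through the set of variables `S`. -/
noncomputable def wview (P : Program Prog Var Val) (S : Set Var) (w : P.World) :
    List (Var → Option Val) :=
  P.pview S (P.text, w.init) w.len

/-- The time relation `T` of the Kripke interpretation: `w T w'` iff the trace `w`
is a (non-strict) prefix of the trace `w'`. -/
def Ttime (P : Program Prog Var Val) (w w' : P.World) : Prop :=
  w.init = w'.init ∧ w.len ≤ w'.len

/-- The knowledge relation `K^C_A = K^P_A` of an agent with read set `RA`:
two worlds are related iff the agent's views of them coincide. -/
def Krel (P : Program Prog Var Val) (RA : Set Var) (w w' : P.World) : Prop :=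
  P.wview RA w = P.wview RA w'

/-- The write-capability relation `W^C_A` of an agent with write set `WA`:
two worlds are related iff both are initial (length-1, i.e. 0 steps) traces and
their `fix`-projections (to the complement of `WA`) coincide. -/
def WCrel (P : Program Prog Var Val) (WA : Set Var) (w w' : P.World) : Prop :=
  w.len = 0 ∧ w'.len = 0 ∧ P.wview WAᶜ w = P.wview WAᶜ w'

/-- The write-permission relation `W^P_A` of an agent with write set `WA`:
two worlds are related iff their `fix`-projections coincide. -/
def WPrel (P : Program Prog Var Val) (WA : Set Var) (w w' : P.World) : Prop :=
  P.wview WAᶜ w = P.wview WAᶜ w'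

/-- The halting atom `↓`: the trace `w` has halted, i.e. its last configuration
admits no further step. -/
def halted (P : Program Prog Var Val) (w : P.World) : Prop :=
  P.step (P.configAt (P.text, w.init) w.len) = none

end Program

end SecModal

namespace SecModal

section Aux

attribute [local instance] Classical.propDecidable

lemma prefix_concat_iff' {α : Type} {p l : List α} {a : α} :
    p <+: l ++ [a] ↔ p <+: l ∨ p = l ++ [a] := by
  constructor
  · rintro ⟨t, ht⟩
    rcases List.eq_nil_or_concat t with rfl | ⟨t', b, rfl⟩
    · right; simpa using ht
    · left
      rw [List.concat_eq_append, ← List.append_assoc] at ht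
      have := List.append_inj' ht (by simp)
      exact ⟨t', this.1⟩
  · rintro (h | rfl)
    · exact h.trans ⟨[a], rfl⟩
    · exact List.prefix_refl _

lemma dest'_concat {α : Type} (a c : α) : ∀ (l : List α),
    List.destutter' (· ≠ ·) a (l ++ [c]) =
      if (a :: l).getLast (by simp) = c then List.destutter' (· ≠ ·) a l
      else List.destutter' (· ≠ ·) a l ++ [c]
  | [] => by
    simp only [List.nil_append, List.destutter'_singleton, List.destutter'_nil,
      List.getLast_singleton]
    split_ifs with h1 h2 h2 <;> simp_all
  | b :: l => by
    simp only [List.cons_append, List.destutter'_cons]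
    rw [dest'_concat b c l, dest'_concat a c l]
    have hgl : (a :: b :: l).getLast (by simp) = (b :: l).getLast (by simp) :=
      List.getLast_cons (by simp)
    split_ifs with h1 h2 h2 <;> simp_all [hgl]

lemma dest_concat {α : Type} (l : List α) (a : α) :
    dest (l ++ [a]) = if l.getLast? = some a then dest l else dest l ++ [a] := by
  cases l with
  | nil => simp [dest]
  | cons b l =>
    rw [dest, dest, List.cons_append, List.destutter_cons', List.destutter_cons',
      dest'_concat]
    have hg : (b :: l).getLast? = some ((b :: l).getLast (by simp)) :=
      List.getLast?_eq_getLast (by simp)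
    rw [hg]
    split_ifs with h1 h2 h2 <;> simp_all

lemma dest_ne_nil {α : Type} {l : List α} (h : l ≠ []) : dest l ≠ [] := by
  simpa [dest, List.destutter_eq_nil] using h

/-- the list of the first `n+1` values of `f`. -/
private def Lst {α : Type} (f : ℕ → α) (n : ℕ) : List α :=
  (List.range (n + 1)).map f

lemma Lst_succ {α : Type} (f : ℕ → α) (n : ℕ) :
    Lst f (n + 1) = Lst f n ++ [f (n + 1)] := by
  simp [Lst, List.range_succ]

lemma dest_Lst_succ {α : Type} (f : ℕ → α) (n : ℕ) :
    dest (Lst f (n + 1)) = dest (Lst f n) ∨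
      dest (Lst f (n + 1)) = dest (Lst f n) ++ [f (n + 1)] := by
  rw [Lst_succ, dest_concat]
  split_ifs <;> simp

lemma dest_Lst_mono {α : Type} (f : ℕ → α) {k n : ℕ} (h : k ≤ n) :
    dest (Lst f k) <+: dest (Lst f n) := by
  induction n with
  | zero => interval_cases k; exact List.prefix_refl _
  | succ n ih =>
    rcases eq_or_lt_of_le h with rfl | h'
    · exact List.prefix_refl _
    · have := ih (Nat.lt_succ_iff.mp h')
      rcases dest_Lst_succ f n with he | he <;> rw [he]
      · exact this
      · exact this.trans ⟨[f (n + 1)], rfl⟩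

lemma dest_Lst_inter {α : Type} (f : ℕ → α) : ∀ (n : ℕ) {p : List α},
    p <+: dest (Lst f n) → p ≠ [] → ∃ k ≤ n, dest (Lst f k) = p
  | 0, p, hp, hne => by
    have hd0 : dest (Lst f 0) = [f 0] := by
      have : List.range 1 = [0] := rfl
      simp [Lst, dest, this]
    rw [hd0] at hp
    have hp' : p <+: ([] : List α) ++ [f 0] := by simpa using hp
    rcases prefix_concat_iff'.mp hp' with h | h
    · exact absurd (List.prefix_nil.mp h) hne
    · exact ⟨0, le_refl _, by rw [hd0, h]; simp⟩
  | n + 1, p, hp, hne => by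
    rcases dest_Lst_succ f n with he | he
    · rw [he] at hp
      obtain ⟨k, hk, hd⟩ := dest_Lst_inter f n hp hne
      exact ⟨k, hk.trans (Nat.le_succ n), hd⟩
    · rw [he] at hp
      rcases prefix_concat_iff'.mp hp with h | rfl
      · obtain ⟨k, hk, hd⟩ := dest_Lst_inter f n h hne
        exact ⟨k, hk.trans (Nat.le_succ n), hd⟩
      · exact ⟨n + 1, le_refl _, he⟩

lemma iter_isSome_of_le {Prog Var Val : Type} (P : Program Prog Var Val)
    (c : Config Prog Var Val) : ∀ {n m : ℕ}, m ≤ n →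
    (P.iter n c).isSome = true → (P.iter m c).isSome = true := by
  intro n
  induction n with
  | zero => intro m hm h; interval_cases m; exact h
  | succ n ih =>
    intro m hm h
    rcases eq_or_lt_of_le hm with rfl | h'
    · exact h
    · apply ih (Nat.lt_succ_iff.mp h')
      cases ho : P.iter n c with
      | none => rw [Program.iter, ho] at h; simp at h
      | some c' => simp [ho]

lemma pview_eq_dest_Lst {Prog Var Val : Type} (P : Program Prog Var Val)
    (S : Set Var) (c : Config Prog Var Val) (n : ℕ) :
    P.pview S c n = dest (Lst (fun k => restrict S (P.configAt c k).2) n) := rfl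

end Aux

/-- The Kripke interpretation of a program `P` with standard security
context (read sets `Rd`) satisfies perfect recall: for every agent `A`, every
temporally sound formula `φ`, and every world `w`, if `w ⊨ [K^C_A]φ` then
`w ⊨ □[K^C_A]φ`. -/
theorem stmt_1 {Prog Var Val Agent : Type} (P : Program Prog Var Val)
    (Rd : Agent → Set Var) (A : Agent) (φ : P.World → Prop)
    (hts : TS P.Ttime φ) (w : P.World)
    (h : box (P.Krel (Rd A)) φ w) :
    box P.Ttime (box (P.Krel (Rd A)) φ) w := by
  intro w' hT w'' hK
  -- f'' : stores along the trace of w''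
  set f'' : ℕ → (Var → Option Val) :=
    fun k => restrict (Rd A) (P.configAt (P.text, w''.init) k).2 with hf''
  -- view of w is a prefix of view of w'
  have hpre : P.wview (Rd A) w <+: P.wview (Rd A) w' := by
    rw [Program.wview, Program.wview, hT.1]
    exact dest_Lst_mono _ hT.2
  have hpre'' : P.wview (Rd A) w <+: dest (Lst f'' w''.len) := by
    rw [← pview_eq_dest_Lst, ← Program.wview, ← hK]
    exact hpre
  have hne : P.wview (Rd A) w ≠ [] := dest_ne_nil (by simp [Lst])
  obtain ⟨k, hk, hdk⟩ := dest_Lst_inter f'' w''.len hpre'' hne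
  -- the intermediate world w₀, a prefix of w'' with the same view as w
  let w₀ : P.World :=
    ⟨w''.init, w''.valid, k, iter_isSome_of_le P _ hk w''.defined⟩
  have hφ₀ : φ w₀ := h w₀ (by
    show P.wview (Rd A) w = P.wview (Rd A) w₀
    rw [Program.wview, pview_eq_dest_Lst]
    exact hdk.symm)
  exact (hts w₀).mp hφ₀ w'' ⟨rfl, hk⟩


end SecModal
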